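/- If S is a subset of ℝ whose complement ℝ \ S has finite Lebesgue measure, then S contains a two-sided infinite arithmetic progression: there exist x ∈ S and a nonzero real number Δ such that x + kΔ ∈ S for every integer k. -/

import Mathlib

open MeasureTheory Set ENNReal

private lemma cast_inv_nat (n : ℕ) :
    ENNReal.ofReal (((n : ℝ) + 1)⁻¹) = ((n : ℝ≥0∞) + 1)⁻¹ := by
  rw [ENNReal.ofReal_inv_of_pos (by positivity)]
  congr 1
  rw [ENNReal.ofReal_add (by positivity) zero_le_one]
  simp

private lemma pointwise_bound (x M : ℝ) (hM : 0 < M) (t : ℝ) :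
    ∑' n : ℕ, (Icc (x + ((n : ℝ) + 1) * M) (x + ((n : ℝ) + 1) * (2 * M))).indicator
      (fun _ => ((n : ℝ≥0∞) + 1)⁻¹) t ≤ 2 := by
  by_cases hs : t - x < M
  · have hz : ∀ n : ℕ, (Icc (x + ((n : ℝ) + 1) * M) (x + ((n : ℝ) + 1) * (2 * M))).indicator
        (fun _ => ((n : ℝ≥0∞) + 1)⁻¹) t = 0 := by
      intro n
      apply indicator_of_notMem
      intro ht
      have h1 : x + ((n : ℝ) + 1) * M ≤ t := ht.1
      have h2 : (0:ℝ) ≤ n := n.cast_nonneg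
      nlinarith
    simp [hz]
  · push_neg at hs
    have hspos : (0:ℝ) < t - x := lt_of_lt_of_le hM hs
    set s : ℝ := t - x with hsdef
    set N : ℕ := ⌊s / M⌋₊ with hNdef
    have hvanish : ∀ n ∉ Finset.range N,
        (Icc (x + ((n : ℝ) + 1) * M) (x + ((n : ℝ) + 1) * (2 * M))).indicator
          (fun _ => ((n : ℝ≥0∞) + 1)⁻¹) t = 0 := by
      intro n hn
      apply indicator_of_notMem
      intro ht
      have h1 : x + ((n : ℝ) + 1) * M ≤ t := ht.1
      have hge : (N : ℝ) ≤ n := by exact_mod_cast Nat.le_of_not_lt (by simpa using hn)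
      have hflt : s / M < N + 1 := Nat.lt_floor_add_one _
      have h3 : s < ((N : ℝ) + 1) * M := by rwa [div_lt_iff₀ hM] at hflt
      have h5 : ((n : ℝ) + 1) * M ≤ s := by
        simp only [hsdef]; linarith
      nlinarith
    rw [tsum_eq_sum hvanish]
    have hbound : ∀ n ∈ Finset.range N,
        (Icc (x + ((n : ℝ) + 1) * M) (x + ((n : ℝ) + 1) * (2 * M))).indicator
          (fun _ => ((n : ℝ≥0∞) + 1)⁻¹) t ≤ ENNReal.ofReal (2 * M / s) := by
      intro n _
      by_cases ht : t ∈ Icc (x + ((n : ℝ) + 1) * M) (x + ((n : ℝ) + 1) * (2 * M))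
      · rw [indicator_of_mem ht]
        rw [← cast_inv_nat]
        apply ENNReal.ofReal_le_ofReal
        have h2 : s ≤ ((n : ℝ) + 1) * (2 * M) := by
          have := ht.2; linarith
        rw [le_div_iff₀ hspos, inv_mul_le_iff₀ (show (0:ℝ) < (n:ℝ)+1 by positivity)]
        linarith
      · rw [indicator_of_notMem ht]; exact zero_le
    calc _ ≤ (Finset.range N).card • ENNReal.ofReal (2 * M / s) :=
            Finset.sum_le_card_nsmul _ _ _ hbound
      _ = (N : ℝ≥0∞) * ENNReal.ofReal (2 * M / s) := by
            rw [Finset.card_range, nsmul_eq_mul]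
      _ ≤ ENNReal.ofReal (s / M) * ENNReal.ofReal (2 * M / s) := by
            gcongr
            rw [← ENNReal.ofReal_natCast]
            exact ENNReal.ofReal_le_ofReal (Nat.floor_le (by positivity))
      _ = ENNReal.ofReal ((s / M) * (2 * M / s)) := by
            rw [ENNReal.ofReal_mul (by positivity)]
      _ ≤ 2 := by
            have : (s / M) * (2 * M / s) = 2 := by field_simp
            rw [this]; simp [ENNReal.ofReal_ofNat]

private lemma key_bound (T : Set ℝ) (hT : MeasurableSet T) (x M : ℝ) (hM : 0 < M) :
    volume (⋃ n : ℕ, Icc M (2 * M) ∩ (fun Δ => x + ((n : ℝ) + 1) * Δ) ⁻¹' T)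
      ≤ 2 * volume T := by
  have step1 : volume (⋃ n : ℕ, Icc M (2 * M) ∩ (fun Δ => x + ((n : ℝ) + 1) * Δ) ⁻¹' T)
      ≤ ∑' n : ℕ, volume (Icc M (2 * M) ∩ (fun Δ => x + ((n : ℝ) + 1) * Δ) ⁻¹' T) :=
    measure_iUnion_le _
  have step2 : ∀ n : ℕ, volume (Icc M (2 * M) ∩ (fun Δ => x + ((n : ℝ) + 1) * Δ) ⁻¹' T)
      ≤ ((n : ℝ≥0∞) + 1)⁻¹ *
        (volume.restrict T) (Icc (x + ((n : ℝ) + 1) * M) (x + ((n : ℝ) + 1) * (2 * M))) := by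
    intro n
    have hc : ((n : ℝ) + 1) ≠ 0 := by positivity
    have hsub : Icc M (2 * M) ∩ (fun Δ => x + ((n : ℝ) + 1) * Δ) ⁻¹' T ⊆
        (fun Δ => x + ((n : ℝ) + 1) * Δ) ⁻¹'
          (T ∩ Icc (x + ((n : ℝ) + 1) * M) (x + ((n : ℝ) + 1) * (2 * M))) := by
      rintro Δ ⟨hΔ, hTm⟩
      have h1 := hΔ.1
      have h2 := hΔ.2
      have hn0 : (0:ℝ) ≤ (n:ℝ) := n.cast_nonneg
      refine ⟨hTm, mem_Icc.mpr ⟨?_, ?_⟩⟩ <;> show _ ≤ _ <;> beta_reduce <;> nlinarith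
    refine (measure_mono hsub).trans ?_
    have hpre : (fun Δ => x + ((n : ℝ) + 1) * Δ) ⁻¹'
          (T ∩ Icc (x + ((n : ℝ) + 1) * M) (x + ((n : ℝ) + 1) * (2 * M)))
        = ((((n : ℝ) + 1)) * ·) ⁻¹' ((x + ·) ⁻¹'
            (T ∩ Icc (x + ((n : ℝ) + 1) * M) (x + ((n : ℝ) + 1) * (2 * M)))) := rfl
    rw [hpre, Real.volume_preimage_mul_left hc, measure_preimage_add,
      Measure.restrict_apply' hT, Set.inter_comm]
    gcongr
    rw [abs_of_pos (by positivity : (0:ℝ) < ((n:ℝ)+1)⁻¹), cast_inv_nat]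
  have step3 : ∑' n : ℕ, ((n : ℝ≥0∞) + 1)⁻¹ *
        (volume.restrict T) (Icc (x + ((n : ℝ) + 1) * M) (x + ((n : ℝ) + 1) * (2 * M)))
      ≤ 2 * volume T := by
    have heq : ∀ n : ℕ, ((n : ℝ≥0∞) + 1)⁻¹ *
          (volume.restrict T) (Icc (x + ((n : ℝ) + 1) * M) (x + ((n : ℝ) + 1) * (2 * M)))
        = ∫⁻ t, (Icc (x + ((n : ℝ) + 1) * M) (x + ((n : ℝ) + 1) * (2 * M))).indicator
            (fun _ => ((n : ℝ≥0∞) + 1)⁻¹) t ∂(volume.restrict T) := by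
      intro n
      rw [lintegral_indicator_const measurableSet_Icc]
    calc ∑' n : ℕ, ((n : ℝ≥0∞) + 1)⁻¹ *
          (volume.restrict T) (Icc (x + ((n : ℝ) + 1) * M) (x + ((n : ℝ) + 1) * (2 * M)))
        = ∫⁻ t, ∑' n : ℕ, (Icc (x + ((n : ℝ) + 1) * M)
            (x + ((n : ℝ) + 1) * (2 * M))).indicator
            (fun _ => ((n : ℝ≥0∞) + 1)⁻¹) t ∂(volume.restrict T) := by
          simp_rw [heq]
          exact (lintegral_tsum fun n =>
            (measurable_const.indicator measurableSet_Icc).aemeasurable).symm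
      _ ≤ ∫⁻ _, 2 ∂(volume.restrict T) :=
          lintegral_mono fun t => pointwise_bound x M hM t
      _ = 2 * volume T := by
          rw [lintegral_const, Measure.restrict_apply_univ]
  calc volume (⋃ n : ℕ, Icc M (2 * M) ∩ (fun Δ => x + ((n : ℝ) + 1) * Δ) ⁻¹' T)
      ≤ ∑' n : ℕ, volume (Icc M (2 * M) ∩ (fun Δ => x + ((n : ℝ) + 1) * Δ) ⁻¹' T) := step1
    _ ≤ ∑' n : ℕ, ((n : ℝ≥0∞) + 1)⁻¹ *
        (volume.restrict T) (Icc (x + ((n : ℝ) + 1) * M) (x + ((n : ℝ) + 1) * (2 * M))) :=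
        ENNReal.tsum_le_tsum step2
    _ ≤ 2 * volume T := step3

/-- If the complement of `S ⊆ ℝ` has finite Lebesgue measure, then `S` contains a
two-sided infinite arithmetic progression. -/
theorem stmt_7 (S : Set ℝ) (h : volume Sᶜ < ⊤) :
    ∃ x ∈ S, ∃ Δ : ℝ, Δ ≠ 0 ∧ ∀ k : ℤ, x + (k : ℝ) * Δ ∈ S := by
  have hSne : S.Nonempty := by
    by_contra hne
    rw [Set.not_nonempty_iff_eq_empty] at hne
    rw [hne, Set.compl_empty] at h
    simp [Real.volume_univ] at h
  obtain ⟨x, hx⟩ := hSne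
  obtain ⟨T, hTsub, hTm, hTvol⟩ := exists_measurable_superset volume Sᶜ
  have hTfin : volume T < ⊤ := hTvol ▸ h
  set M : ℝ := (volume T).toReal * 4 + 1 with hMdef
  have hM : 0 < M := by positivity
  have hMbig : 4 * volume T < ENNReal.ofReal M := by
    have hTe : volume T = ENNReal.ofReal ((volume T).toReal) :=
      (ENNReal.ofReal_toReal hTfin.ne).symm
    rw [hTe, ← ENNReal.ofReal_ofNat 4, ← ENNReal.ofReal_mul (by norm_num)]
    rw [ENNReal.ofReal_lt_ofReal_iff hM]
    rw [hMdef]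
    norm_num
    linarith [ENNReal.toReal_nonneg (a := volume T)]
  set T2 : Set ℝ := (fun t : ℝ => 2 * x + -t) ⁻¹' T with hT2def
  have hT2m : MeasurableSet T2 := by
    have hmeas : Measurable fun t : ℝ => 2 * x + -t := measurable_neg.const_add (2 * x)
    exact hmeas hTm
  have hT2vol : volume T2 = volume T := by
    rw [show T2 = Neg.neg ⁻¹' ((fun u : ℝ => 2 * x + u) ⁻¹' T) from rfl,
      Measure.measure_preimage_neg, measure_preimage_add]
  set B : Set ℝ :=
    (⋃ n : ℕ, Icc M (2 * M) ∩ (fun Δ => x + ((n : ℝ) + 1) * Δ) ⁻¹' T) ∪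
    (⋃ n : ℕ, Icc M (2 * M) ∩ (fun Δ => x + ((n : ℝ) + 1) * Δ) ⁻¹' T2) with hBdef
  have hBvol : volume B < ENNReal.ofReal M := by
    refine lt_of_le_of_lt ?_ hMbig
    refine (measure_union_le _ _).trans ?_
    have hb1 := key_bound T hTm x M hM
    have hb2 := key_bound T2 hT2m x M hM
    rw [hT2vol] at hb2
    calc _ ≤ 2 * volume T + 2 * volume T := add_le_add hb1 hb2
      _ = 4 * volume T := by ring
  have hnsub : ¬ Icc M (2 * M) ⊆ B := by
    intro hsub
    have := measure_mono (μ := (volume : Measure ℝ)) hsub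
    rw [Real.volume_Icc, show 2 * M - M = M by ring] at this
    exact absurd (this.trans_lt hBvol) (lt_irrefl _)
  obtain ⟨Δ, hΔI, hΔB⟩ := Set.not_subset.mp hnsub
  have hΔpos : 0 < Δ := lt_of_lt_of_le hM hΔI.1
  refine ⟨x, hx, Δ, ne_of_gt hΔpos, fun k => ?_⟩
  rcases lt_trichotomy k 0 with hk | hk | hk
  · -- negative k
    obtain ⟨n, hn⟩ : ∃ n : ℕ, k = -((n : ℤ) + 1) := ⟨(-k - 1).toNat, by omega⟩
    by_contra hc
    apply hΔB
    refine Set.mem_union_right _ (Set.mem_iUnion.mpr ⟨n, hΔI, ?_⟩)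
    have hmem : x + (k : ℝ) * Δ ∈ T := hTsub hc
    show x + ((n : ℝ) + 1) * Δ ∈ T2
    show 2 * x + -(x + ((n : ℝ) + 1) * Δ) ∈ T
    have : 2 * x + -(x + ((n : ℝ) + 1) * Δ) = x + (k : ℝ) * Δ := by
      rw [hn]; push_cast; ring
    rwa [this]
  · subst hk; simpa using hx
  · -- positive k
    obtain ⟨n, hn⟩ : ∃ n : ℕ, k = (n : ℤ) + 1 := ⟨(k - 1).toNat, by omega⟩
    by_contra hc
    apply hΔB
    refine Set.mem_union_left _ (Set.mem_iUnion.mpr ⟨n, hΔI, ?_⟩)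
    have hmem : x + (k : ℝ) * Δ ∈ T := hTsub hc
    show x + ((n : ℝ) + 1) * Δ ∈ T
    have : x + ((n : ℝ) + 1) * Δ = x + (k : ℝ) * Δ := by rw [hn]; push_cast; ring
    rwa [this]
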